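/- No random nearest neighbor digraph is a vertex-arc random digraph: with n ≥ 3, 1 ≤ k < n−1, d ≥ 1, a norm |·| on ℝ^d, and a Borel probability measure μ on ℝ^d whose n-fold product gives full measure to tie-free configurations, there exist no probability space (Ω,ν) and measurable φ : Ω × Ω → [0,1] such that for every digraph D on [n], μⁿ({x : kNND(x) = D}) = ∫ ∏_{(i,j)∈A(D)} φ(y_i,y_j) · ∏_{(i,j)∉A(D), i≠j} (1 − φ(y_i,y_j)) dνⁿ(y). -/

import Mathlib

open MeasureTheory Finset

/-- A finset of ordered pairs is (the arc set of) a digraph on `Fin n` if it has no loops. -/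
def IsDigraph {n : ℕ} (A : Finset (Fin n × Fin n)) : Prop := ∀ p ∈ A, p.1 ≠ p.2

/-- The arc set of the `k` nearest neighbor digraph of the points `x 1, …, x n` in `ℝ^d`. -/
noncomputable def kNND {n d : ℕ} (k : ℕ) (nrm : (Fin d → ℝ) → ℝ)
    (x : Fin n → Fin d → ℝ) : Finset (Fin n × Fin n) :=
  Finset.univ.filter fun p : Fin n × Fin n => p.1 ≠ p.2 ∧
    (Finset.univ.filter fun l : Fin n =>
      l ≠ p.1 ∧ nrm (x p.1 - x l) < nrm (x p.1 - x p.2)).card < k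

/-- A configuration of points is tie-free if for each `i` the distances from `x i` to the
other points are pairwise distinct. -/
def TieFree {n d : ℕ} (nrm : (Fin d → ℝ) → ℝ) (x : Fin n → Fin d → ℝ) : Prop :=
  ∀ i j l : Fin n, j ≠ i → l ≠ i → j ≠ l → nrm (x i - x j) ≠ nrm (x i - x l)

/-- The probability that the vertex-arc random digraph `D(n, Ω, ν, φ)` equals the digraph
with arc set `A`. -/
noncomputable def vardP {Ω : Type*} [MeasurableSpace Ω] (ν : Measure Ω) {n : ℕ}
    (φ : Ω → Ω → ℝ) (A : Finset (Fin n × Fin n)) : ℝ :=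
  ∫ y : Fin n → Ω,
    (∏ p ∈ A, φ (y p.1) (y p.2)) *
      ∏ p ∈ Finset.univ.filter (fun p : Fin n × Fin n => p.1 ≠ p.2 ∧ p ∉ A),
        (1 - φ (y p.1) (y p.2)) ∂(Measure.pi fun _ : Fin n => ν)

/-- Rank counting: if `f` is injective on `S` and `k ≤ |S|`, then exactly `k` elements of `S`
have fewer than `k` elements of `S` strictly below them. -/
lemma rank_card {α : Type*} [DecidableEq α] (S : Finset α) (f : α → ℝ)
    (hf : Set.InjOn f S) {k : ℕ} (hk : k ≤ S.card) :
    (S.filter fun j => (S.filter fun l => f l < f j).card < k).card = k := by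
  set r : α → ℕ := fun j => (S.filter fun l => f l < f j).card with hr
  have hmono : ∀ j ∈ S, ∀ l ∈ S, f j < f l → r j < r l := by
    intro j hj l hl hfl
    apply Finset.card_lt_card
    constructor
    · intro a ha
      simp only [mem_filter] at ha ⊢
      exact ⟨ha.1, ha.2.trans hfl⟩
    · intro hsub
      have := hsub (Finset.mem_filter.2 ⟨hj, hfl⟩)
      simp only [mem_filter] at this
      exact lt_irrefl _ this.2
  have hinj : Set.InjOn r S := by
    intro j hj l hl hrl
    by_contra hne
    rcases lt_trichotomy (f j) (f l) with h | h | h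
    · exact absurd hrl (Nat.ne_of_lt (hmono j hj l hl h))
    · exact hne (hf hj hl h)
    · exact absurd hrl.symm (Nat.ne_of_lt (hmono l hl j hj h))
  have hlt : ∀ j ∈ S, r j < S.card := by
    intro j hj
    have hsub : (S.filter fun l => f l < f j) ⊆ S.erase j := by
      intro a ha
      simp only [mem_filter] at ha
      refine Finset.mem_erase.2 ⟨?_, ha.1⟩
      rintro rfl; exact lt_irrefl _ ha.2
    calc r j ≤ (S.erase j).card := Finset.card_le_card hsub
    _ < S.card := by
        rw [Finset.card_erase_of_mem hj]
        have : 0 < S.card := Finset.card_pos.2 ⟨j, hj⟩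
        omega
  have himg : S.image r = Finset.range S.card := by
    apply Finset.eq_of_subset_of_card_le
    · intro a ha
      rcases Finset.mem_image.1 ha with ⟨j, hj, rfl⟩
      exact Finset.mem_range.2 (hlt j hj)
    · rw [Finset.card_range, Finset.card_image_of_injOn hinj]
  have hfe : (S.filter fun j => (S.filter fun l => f l < f j).card < k)
      = S.filter (fun j => r j < k) := rfl
  rw [hfe, ← Finset.card_image_of_injOn (hinj.mono (Finset.filter_subset _ _)),
    show Finset.image r (S.filter fun j => r j < k) = (S.image r).filter (fun a => a < k)
      from (Finset.filter_image (f := r) (s := S) (p := fun a => a < k)).symm, himg]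
  have : (Finset.range S.card).filter (fun a => a < k) = Finset.range k := by
    ext a
    simp only [mem_filter, mem_range]
    omega
  rw [this, Finset.card_range]

/-- For a tie-free configuration, vertex `0` has out-degree exactly `k` in the `k`NND. -/
lemma kNND_outdeg {m d k : ℕ} {nrm : (Fin d → ℝ) → ℝ} {x : Fin (m+1) → Fin d → ℝ}
    (htf : TieFree nrm x) (hk : k ≤ m) :
    ((kNND k nrm x).filter fun p => p.1 = 0).card = k := by
  classical
  set S : Finset (Fin (m+1)) := Finset.univ.erase 0 with hS
  set f : Fin (m+1) → ℝ := fun j => nrm (x 0 - x j) with hf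
  have hsets : ∀ c : ℝ, (Finset.univ.filter fun l => l ≠ (0 : Fin (m+1)) ∧ f l < c)
      = S.filter (fun l => f l < c) := by
    intro c
    ext l
    simp only [Finset.mem_filter, Finset.mem_univ, true_and, hS, Finset.mem_erase]
    tauto
  have key : (kNND k nrm x).filter (fun p => p.1 = 0)
      = (S.filter fun j => (S.filter fun l => f l < f j).card < k).image
          (fun j => ((0 : Fin (m+1)), j)) := by
    ext p
    constructor
    · intro hp
      obtain ⟨hk1, ha⟩ := Finset.mem_filter.1 hp
      obtain ⟨a, b⟩ := p
      simp only at ha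
      subst ha
      rw [kNND, Finset.mem_filter] at hk1
      obtain ⟨-, hne, hcard⟩ := hk1
      simp only at hne hcard
      rw [hsets] at hcard
      exact Finset.mem_image.2 ⟨b, Finset.mem_filter.2
        ⟨Finset.mem_erase.2 ⟨fun h => hne (h ▸ rfl), Finset.mem_univ _⟩, hcard⟩, rfl⟩
    · intro hp
      obtain ⟨j, hj, rfl⟩ := Finset.mem_image.1 hp
      obtain ⟨hj1, hcard⟩ := Finset.mem_filter.1 hj
      obtain ⟨hj0, -⟩ := Finset.mem_erase.1 hj1
      refine Finset.mem_filter.2 ⟨?_, rfl⟩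
      rw [kNND, Finset.mem_filter]
      refine ⟨Finset.mem_univ _, fun h => hj0 ?_, ?_⟩
      · simpa using h.symm
      · show (Finset.univ.filter fun l => l ≠ (0 : Fin (m+1)) ∧ f l < f j).card < k
        rw [hsets]; exact hcard
  rw [key, Finset.card_image_of_injective _ (fun a b hab => congrArg Prod.snd hab)]
  apply rank_card
  · intro a ha b hb hab
    by_contra hne
    simp only [hS, Finset.coe_erase, Set.mem_diff, Set.mem_singleton_iff] at ha hb
    exact htf 0 a b ha.2 hb.2 hne hab
  · rw [hS, Finset.card_erase_of_mem (Finset.mem_univ _), Finset.card_univ, Fintype.card_fin]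
    omega

lemma pi_integral_pow {Ω : Type*} [MeasurableSpace Ω] (ν : Measure Ω) [IsProbabilityMeasure ν]
    (m : ℕ) (h : Ω → ℝ) :
    ∫ w : Fin m → Ω, ∏ j, h (w j) ∂(Measure.pi fun _ => ν) = (∫ v, h v ∂ν) ^ m := by
  letI : MeasureSpace Ω := ⟨ν⟩
  haveI : SigmaFinite (volume : Measure Ω) := (by infer_instance : SigmaFinite ν)
  have hvol : (Measure.pi fun _ : Fin m => ν) = (volume : Measure (Fin m → Ω)) := rfl
  rw [hvol]
  have := MeasureTheory.integral_fintype_prod_volume_eq_pow (ι := Fin m) h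
  rw [Fintype.card_fin] at this
  exact this

lemma fubini_aux {Ω : Type*} [MeasurableSpace Ω] (ν : Measure Ω) [IsProbabilityMeasure ν]
    (m : ℕ) (g : Ω → Ω → ℝ) (hg : Measurable (Function.uncurry g))
    (hb : ∀ u v, |g u v| ≤ 1) :
    ∫ y : Fin (m+1) → Ω, ∏ j : Fin m, g (y 0) (y j.succ) ∂(Measure.pi fun _ => ν)
      = ∫ u, (∫ v, g u v ∂ν) ^ m ∂ν := by
  have mp := measurePreserving_piFinSuccAbove (fun _ : Fin (m+1) => ν) 0
  have hgm : Measurable (fun z : Ω × (Fin m → Ω) => ∏ j, g z.1 (z.2 j)) := by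
    apply Finset.measurable_prod
    intro j _
    exact hg.comp (measurable_fst.prodMk ((measurable_pi_apply j).comp measurable_snd))
  have step1 := mp.integral_comp' (g := fun z : Ω × (Fin m → Ω) => ∏ j, g z.1 (z.2 j))
  have hint : Integrable (fun z : Ω × (Fin m → Ω) => ∏ j, g z.1 (z.2 j))
      (ν.prod (Measure.pi fun _ : Fin m => ν)) := by
    refine (integrable_const (1 : ℝ)).mono' hgm.aestronglyMeasurable ?_
    filter_upwards with z
    calc |∏ j, g z.1 (z.2 j)| = ∏ j, |g z.1 (z.2 j)| := by rw [Finset.abs_prod]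
    _ ≤ 1 := Finset.prod_le_one (fun j _ => abs_nonneg _) (fun j _ => hb _ _)
  set e := MeasurableEquiv.piFinSuccAbove (fun _ : Fin (m+1) => Ω) 0 with he
  calc (∫ y : Fin (m+1) → Ω, ∏ j : Fin m, g (y 0) (y j.succ) ∂(Measure.pi fun _ => ν))
      = ∫ y : Fin (m+1) → Ω, ∏ j : Fin m, g (e y).1 ((e y).2 j)
          ∂(Measure.pi fun _ => ν) := by
        apply integral_congr_ae
        filter_upwards with y
        apply Finset.prod_congr rfl
        intro j _
        have h1 : (e y).1 = y 0 := rfl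
        have h2 : (e y).2 j = y ((0 : Fin (m+1)).succAbove j) := rfl
        rw [h1, h2, Fin.zero_succAbove]
    _ = ∫ z : Ω × (Fin m → Ω), ∏ j, g z.1 (z.2 j)
          ∂(ν.prod (Measure.pi fun _ : Fin m => ν)) := step1
    _ = ∫ u, ∫ w : Fin m → Ω, ∏ j, g u (w j) ∂(Measure.pi fun _ : Fin m => ν) ∂ν :=
        MeasureTheory.integral_prod _ hint
    _ = ∫ u, (∫ v, g u v ∂ν) ^ m ∂ν := by
        apply integral_congr_ae
        filter_upwards with u
        exact pi_integral_pow ν m (fun v => g u v)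

/-- Marginalizing a VARD-type sum over all arc sets disjoint from `Row`. -/
lemma powerset_sum_eq {ι : Type*} [DecidableEq ι] (Arcs Row : Finset ι) (hsub : Row ⊆ Arcs)
    (a : ι → ℝ) :
    ∑ B ∈ (Arcs \ Row).powerset, (∏ p ∈ B, a p) * ∏ p ∈ Arcs \ B, (1 - a p)
      = ∏ p ∈ Row, (1 - a p) := by
  set S := Arcs \ Row with hSdef
  have hdisjS : Disjoint Row S := Finset.disjoint_sdiff
  calc ∑ B ∈ S.powerset, (∏ p ∈ B, a p) * ∏ p ∈ Arcs \ B, (1 - a p)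
      = ∑ B ∈ S.powerset, (∏ p ∈ Row, (1 - a p)) *
          ((∏ p ∈ B, a p) * ∏ p ∈ S \ B, (1 - a p)) := by
        apply Finset.sum_congr rfl
        intro B hB
        have hBS : B ⊆ S := Finset.mem_powerset.1 hB
        have hdecomp : Arcs \ B = Row ∪ (S \ B) := by
          ext p
          simp only [Finset.mem_sdiff, Finset.mem_union, hSdef]
          constructor
          · rintro ⟨hpA, hpB⟩
            by_cases hp : p ∈ Row
            · exact Or.inl hp
            · exact Or.inr ⟨⟨hpA, hp⟩, hpB⟩
          · rintro (hp | ⟨⟨hpA, -⟩, hpB⟩)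
            · exact ⟨hsub hp, fun hb => (Finset.disjoint_left.1 hdisjS) hp (hBS hb)⟩
            · exact ⟨hpA, hpB⟩
        rw [hdecomp, Finset.prod_union (hdisjS.mono_right (Finset.sdiff_subset))]
        ring
    _ = (∏ p ∈ Row, (1 - a p)) *
          ∑ B ∈ S.powerset, (∏ p ∈ B, a p) * ∏ p ∈ S \ B, (1 - a p) := by
        rw [Finset.mul_sum]
    _ = (∏ p ∈ Row, (1 - a p)) * ∏ p ∈ S, (a p + (1 - a p)) := by
        rw [Finset.prod_add]
    _ = ∏ p ∈ Row, (1 - a p) := by simp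

/-- Marginalizing a VARD-type sum over all arc sets containing `Row`. -/
lemma powerset_sum_eq' {ι : Type*} [DecidableEq ι] (Arcs Row : Finset ι) (hsub : Row ⊆ Arcs)
    (a : ι → ℝ) :
    ∑ B ∈ (Arcs \ Row).powerset, (∏ p ∈ Row ∪ B, a p) * ∏ p ∈ Arcs \ (Row ∪ B), (1 - a p)
      = ∏ p ∈ Row, a p := by
  set S := Arcs \ Row with hSdef
  have hdisjS : Disjoint Row S := Finset.disjoint_sdiff
  calc ∑ B ∈ S.powerset, (∏ p ∈ Row ∪ B, a p) * ∏ p ∈ Arcs \ (Row ∪ B), (1 - a p)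
      = ∑ B ∈ S.powerset, (∏ p ∈ Row, a p) *
          ((∏ p ∈ B, a p) * ∏ p ∈ S \ B, (1 - a p)) := by
        apply Finset.sum_congr rfl
        intro B hB
        have hBS : B ⊆ S := Finset.mem_powerset.1 hB
        have hdecomp : Arcs \ (Row ∪ B) = S \ B := by
          ext p
          simp only [Finset.mem_sdiff, Finset.mem_union, hSdef]
          tauto
        rw [hdecomp, Finset.prod_union (hdisjS.mono_right hBS)]
        ring
    _ = (∏ p ∈ Row, a p) *
          ∑ B ∈ S.powerset, (∏ p ∈ B, a p) * ∏ p ∈ S \ B, (1 - a p) := by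
        rw [Finset.mul_sum]
    _ = (∏ p ∈ Row, a p) * ∏ p ∈ S, (a p + (1 - a p)) := by
        rw [Finset.prod_add]
    _ = ∏ p ∈ Row, a p := by simp

/-- No random nearest neighbor digraph is a vertex-arc random digraph. -/
theorem stmt10 {n d k : ℕ} (hn : 3 ≤ n) (hd : 1 ≤ d) (hk : 1 ≤ k) (hkn : k < n - 1)
    (nrm : (Fin d → ℝ) → ℝ)
    (hnrm0 : ∀ v, nrm v = 0 ↔ v = 0)
    (hnrm_smul : ∀ (c : ℝ) (v : Fin d → ℝ), nrm (c • v) = |c| * nrm v)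
    (hnrm_add : ∀ u v : Fin d → ℝ, nrm (u + v) ≤ nrm u + nrm v)
    (μ : Measure (Fin d → ℝ)) [IsProbabilityMeasure μ]
    (htf : ∀ᵐ x ∂(Measure.pi fun _ : Fin n => μ), TieFree nrm x)
    (Ω : Type*) [MeasurableSpace Ω] (ν : Measure Ω) [IsProbabilityMeasure ν]
    (φ : Ω → Ω → ℝ) (hmeas : Measurable (Function.uncurry φ))
    (hφ : ∀ x y, φ x y ∈ Set.Icc (0 : ℝ) 1) :
    ¬ ∀ A : Finset (Fin n × Fin n), IsDigraph A →
        (Measure.pi (fun _ : Fin n => μ) {x | kNND k nrm x = A}).toReal = vardP ν φ A := by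
  intro h
  classical
  obtain ⟨m, rfl⟩ : ∃ m, n = m + 1 := ⟨n - 1, by omega⟩
  have hkm : k ≤ m := by omega
  have hkltm : k < m := by omega
  have hm2 : 2 ≤ m := by omega
  -- arc sets
  set Row : Finset (Fin (m+1) × Fin (m+1)) :=
    (Finset.univ.erase (0 : Fin (m+1))).image fun j => ((0 : Fin (m+1)), j) with hRowdef
  set Arcs : Finset (Fin (m+1) × Fin (m+1)) :=
    Finset.univ.filter fun p => p.1 ≠ p.2 with hArcsdef
  have hRowmem : ∀ p : Fin (m+1) × Fin (m+1), p ∈ Row ↔ p.1 = 0 ∧ p.2 ≠ 0 := by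
    intro p
    constructor
    · intro hp
      obtain ⟨j, hj, rfl⟩ := Finset.mem_image.1 hp
      exact ⟨rfl, (Finset.mem_erase.1 hj).1⟩
    · rintro ⟨h1, h2⟩
      refine Finset.mem_image.2 ⟨p.2, Finset.mem_erase.2 ⟨h2, Finset.mem_univ _⟩, ?_⟩
      obtain ⟨a, b⟩ := p
      simp only at h1
      rw [h1]
  have hRowArcs : Row ⊆ Arcs := by
    intro p hp
    obtain ⟨h1, h2⟩ := (hRowmem p).1 hp
    exact Finset.mem_filter.2 ⟨Finset.mem_univ _, by rw [h1]; exact fun hx => h2 hx.symm⟩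
  set S : Finset (Fin (m+1) × Fin (m+1)) := Arcs \ Row with hSdef
  have hSmem : ∀ p : Fin (m+1) × Fin (m+1), p ∈ S → p.1 ≠ p.2 ∧ p.1 ≠ 0 := by
    intro p hp
    obtain ⟨hpA, hpR⟩ := Finset.mem_sdiff.1 hp
    have h12 : p.1 ≠ p.2 := (Finset.mem_filter.1 hpA).2
    refine ⟨h12, fun h0 => hpR ((hRowmem p).2 ⟨h0, fun h2 => h12 (h0.trans h2.symm)⟩)⟩
  have hRowcard : Row.card = m := by
    rw [hRowdef, Finset.card_image_of_injective _ (fun a b hab => congrArg Prod.snd hab),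
      Finset.card_erase_of_mem (Finset.mem_univ _), Finset.card_univ, Fintype.card_fin]
    omega
  -- vanishing of RNND probabilities for wrong out-degrees
  have hzero : ∀ A : Finset (Fin (m+1) × Fin (m+1)), IsDigraph A →
      (A.filter fun p => p.1 = 0).card ≠ k → vardP ν φ A = 0 := by
    intro A hA hcard
    rw [← h A hA]
    have hsub : {x : Fin (m+1) → Fin d → ℝ | kNND k nrm x = A} ⊆
        {x | ¬ TieFree nrm x} := by
      intro x hx hTF
      apply hcard
      rw [← show kNND k nrm x = A from hx]
      exact kNND_outdeg hTF hkm
    have hnull : Measure.pi (fun _ : Fin (m+1) => μ) {x | kNND k nrm x = A} = 0 :=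
      measure_mono_null hsub (by simpa [ae_iff] using htf)
    rw [hnull]
    simp
  -- measurability and integrability of the VARD integrands
  have hφmeas : ∀ i j : Fin (m+1),
      Measurable fun y : Fin (m+1) → Ω => φ (y i) (y j) := by
    intro i j
    have heq : (fun y : Fin (m+1) → Ω => φ (y i) (y j))
        = Function.uncurry φ ∘ (fun y => (y i, y j)) := rfl
    rw [heq]
    exact hmeas.comp ((measurable_pi_apply i).prodMk (measurable_pi_apply j))
  have hintTC : ∀ T C : Finset (Fin (m+1) × Fin (m+1)),
      Integrable (fun y : Fin (m+1) → Ω =>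
        (∏ p ∈ T, φ (y p.1) (y p.2)) * ∏ p ∈ C, (1 - φ (y p.1) (y p.2)))
        (Measure.pi fun _ : Fin (m+1) => ν) := by
    intro T C
    have hmT : Measurable fun y : Fin (m+1) → Ω => ∏ p ∈ T, φ (y p.1) (y p.2) :=
      Finset.measurable_prod _ fun p _ => hφmeas p.1 p.2
    have hmC : Measurable fun y : Fin (m+1) → Ω => ∏ p ∈ C, (1 - φ (y p.1) (y p.2)) :=
      Finset.measurable_prod _ fun p _ => measurable_const.sub (hφmeas p.1 p.2)
    refine (integrable_const (1 : ℝ)).mono' (hmT.mul hmC).aestronglyMeasurable ?_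
    filter_upwards with y
    rw [Real.norm_eq_abs, abs_mul, Finset.abs_prod, Finset.abs_prod]
    refine mul_le_one₀ ?_ (Finset.prod_nonneg fun p _ => abs_nonneg _) ?_
    · refine Finset.prod_le_one (fun p _ => abs_nonneg _) fun p _ => ?_
      rw [abs_of_nonneg (hφ _ _).1]
      exact (hφ _ _).2
    · refine Finset.prod_le_one (fun p _ => abs_nonneg _) fun p _ => ?_
      rw [abs_of_nonneg (by linarith [(hφ (y p.1) (y p.2)).2])]
      linarith [(hφ (y p.1) (y p.2)).1]
  -- rewriting `vardP` with `Arcs \ A`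
  have hvard : ∀ A : Finset (Fin (m+1) × Fin (m+1)), vardP ν φ A =
      ∫ y : Fin (m+1) → Ω, (∏ p ∈ A, φ (y p.1) (y p.2)) *
        ∏ p ∈ Arcs \ A, (1 - φ (y p.1) (y p.2)) ∂(Measure.pi fun _ : Fin (m+1) => ν) := by
    intro A
    have hfe : (Finset.univ.filter fun p : Fin (m+1) × Fin (m+1) => p.1 ≠ p.2 ∧ p ∉ A)
        = Arcs \ A := by
      ext p
      simp [hArcsdef, Finset.mem_sdiff, Finset.mem_filter]
    rw [vardP, hfe]
  -- the two marginalized sums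
  have hsum0 : ∑ B ∈ S.powerset, vardP ν φ B =
      ∫ y : Fin (m+1) → Ω, ∏ p ∈ Row, (1 - φ (y p.1) (y p.2))
        ∂(Measure.pi fun _ : Fin (m+1) => ν) := by
    calc ∑ B ∈ S.powerset, vardP ν φ B
        = ∑ B ∈ S.powerset, ∫ y : Fin (m+1) → Ω, (∏ p ∈ B, φ (y p.1) (y p.2)) *
            ∏ p ∈ Arcs \ B, (1 - φ (y p.1) (y p.2))
            ∂(Measure.pi fun _ : Fin (m+1) => ν) :=
          Finset.sum_congr rfl fun B _ => hvard B
      _ = ∫ y : Fin (m+1) → Ω, ∑ B ∈ S.powerset, (∏ p ∈ B, φ (y p.1) (y p.2)) *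
            ∏ p ∈ Arcs \ B, (1 - φ (y p.1) (y p.2))
            ∂(Measure.pi fun _ : Fin (m+1) => ν) :=
          (integral_finset_sum _ fun B _ => hintTC B (Arcs \ B)).symm
      _ = _ := by
          apply integral_congr_ae
          filter_upwards with y
          exact powerset_sum_eq Arcs Row hRowArcs fun p => φ (y p.1) (y p.2)
  have hsum1 : ∑ B ∈ S.powerset, vardP ν φ (Row ∪ B) =
      ∫ y : Fin (m+1) → Ω, ∏ p ∈ Row, φ (y p.1) (y p.2)
        ∂(Measure.pi fun _ : Fin (m+1) => ν) := by
    calc ∑ B ∈ S.powerset, vardP ν φ (Row ∪ B)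
        = ∑ B ∈ S.powerset, ∫ y : Fin (m+1) → Ω, (∏ p ∈ Row ∪ B, φ (y p.1) (y p.2)) *
            ∏ p ∈ Arcs \ (Row ∪ B), (1 - φ (y p.1) (y p.2))
            ∂(Measure.pi fun _ : Fin (m+1) => ν) :=
          Finset.sum_congr rfl fun B _ => hvard (Row ∪ B)
      _ = ∫ y : Fin (m+1) → Ω, ∑ B ∈ S.powerset, (∏ p ∈ Row ∪ B, φ (y p.1) (y p.2)) *
            ∏ p ∈ Arcs \ (Row ∪ B), (1 - φ (y p.1) (y p.2))
            ∂(Measure.pi fun _ : Fin (m+1) => ν) :=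
          (integral_finset_sum _ fun B _ => hintTC (Row ∪ B) (Arcs \ (Row ∪ B))).symm
      _ = _ := by
          apply integral_congr_ae
          filter_upwards with y
          exact powerset_sum_eq' Arcs Row hRowArcs fun p => φ (y p.1) (y p.2)
  -- both sums vanish
  have hzero0 : ∑ B ∈ S.powerset, vardP ν φ B = 0 := by
    apply Finset.sum_eq_zero
    intro B hB
    have hBS : B ⊆ S := Finset.mem_powerset.1 hB
    refine hzero B (fun p hp => (hSmem p (hBS hp)).1) ?_
    have : B.filter (fun p => p.1 = 0) = ∅ := by
      apply Finset.filter_eq_empty_iff.2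
      intro p hp
      exact (hSmem p (hBS hp)).2
    rw [this]
    simpa using fun hzero' => by omega
  have hzero1 : ∑ B ∈ S.powerset, vardP ν φ (Row ∪ B) = 0 := by
    apply Finset.sum_eq_zero
    intro B hB
    have hBS : B ⊆ S := Finset.mem_powerset.1 hB
    refine hzero (Row ∪ B) ?_ ?_
    · intro p hp
      rcases Finset.mem_union.1 hp with hp | hp
      · exact (Finset.mem_filter.1 (hRowArcs hp)).2
      · exact (hSmem p (hBS hp)).1
    · have : (Row ∪ B).filter (fun p => p.1 = 0) = Row := by
        ext p
        simp only [Finset.mem_filter, Finset.mem_union]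
        constructor
        · rintro ⟨hp | hp, h0⟩
          · exact hp
          · exact absurd h0 (hSmem p (hBS hp)).2
        · intro hp
          exact ⟨Or.inl hp, ((hRowmem p).1 hp).1⟩
      rw [this, hRowcard]
      omega
  -- rewrite the products over `Row` as products over `Fin m`
  have hRowprod : ∀ (F : Ω → Ω → ℝ) (y : Fin (m+1) → Ω),
      ∏ p ∈ Row, F (y p.1) (y p.2) = ∏ j : Fin m, F (y 0) (y j.succ) := by
    intro F y
    rw [hRowdef, Finset.prod_image (fun a _ b _ hab => congrArg Prod.snd hab)]
    have herase : Finset.univ.erase (0 : Fin (m+1)) = Finset.univ.image Fin.succ := by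
      ext a
      simp only [Finset.mem_erase, Finset.mem_univ, and_true, Finset.mem_image, true_and]
      constructor
      · intro ha
        obtain ⟨j, rfl⟩ := Fin.eq_succ_of_ne_zero ha
        exact ⟨j, rfl⟩
      · rintro ⟨j, rfl⟩
        exact Fin.succ_ne_zero j
    rw [herase, Finset.prod_image (fun a _ b _ hab => Fin.succ_injective m hab)]
  -- conclude via Fubini
  have hφb : ∀ u v, |φ u v| ≤ 1 := fun u v => by
    rw [abs_of_nonneg (hφ u v).1]; exact (hφ u v).2
  have h1φb : ∀ u v, |1 - φ u v| ≤ 1 := fun u v => by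
    rw [abs_of_nonneg (by linarith [(hφ u v).2])]
    linarith [(hφ u v).1]
  have hint0 : ∫ u, (∫ v, (1 - φ u v) ∂ν) ^ m ∂ν = 0 := by
    rw [← fubini_aux ν m (fun u v => 1 - φ u v)
      (measurable_const.sub hmeas : Measurable fun p : Ω × Ω => (1:ℝ) - Function.uncurry φ p) h1φb]
    rw [← hzero0, hsum0]
    apply integral_congr_ae
    filter_upwards with y
    exact (hRowprod (fun u v => 1 - φ u v) y).symm
  have hint1 : ∫ u, (∫ v, φ u v ∂ν) ^ m ∂ν = 0 := by
    rw [← fubini_aux ν m φ hmeas hφb]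
    rw [← hzero1, hsum1]
    apply integral_congr_ae
    filter_upwards with y
    exact (hRowprod φ y).symm
  -- properties of `q u = ∫ φ u v dν`
  set q : Ω → ℝ := fun u => ∫ v, φ u v ∂ν with hq
  have hφuint : ∀ u, Integrable (fun v => φ u v) ν := by
    intro u
    refine (integrable_const (1 : ℝ)).mono'
      ((hmeas.comp (measurable_const.prodMk measurable_id)).aestronglyMeasurable) ?_
    filter_upwards with v
    exact hφb u v
  have hq0 : ∀ u, 0 ≤ q u := fun u => integral_nonneg fun v => (hφ u v).1
  have hq1 : ∀ u, q u ≤ 1 := by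
    intro u
    have h1 : ∫ v, φ u v ∂ν ≤ ∫ _, (1 : ℝ) ∂ν :=
      integral_mono (hφuint u) (integrable_const 1) (fun v => (hφ u v).2)
    simpa using h1
  have hqmeas : Measurable q :=
    (hmeas.stronglyMeasurable.integral_prod_right').measurable
  have h1q : ∀ u, ∫ v, (1 - φ u v) ∂ν = 1 - q u := by
    intro u
    rw [integral_sub (integrable_const 1) (hφuint u)]
    simp
    rfl
  -- extract a.e. statements
  have hqintpow : Integrable (fun u => q u ^ m) ν := by
    refine (integrable_const (1 : ℝ)).mono' (hqmeas.pow_const m).aestronglyMeasurable ?_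
    filter_upwards with u
    show |q u ^ m| ≤ 1
    rw [abs_of_nonneg (pow_nonneg (hq0 u) m)]
    exact pow_le_one₀ (hq0 u) (hq1 u)
  have h1qintpow : Integrable (fun u => (1 - q u) ^ m) ν := by
    refine (integrable_const (1 : ℝ)).mono'
      ((measurable_const.sub hqmeas).pow_const m).aestronglyMeasurable ?_
    filter_upwards with u
    show |(1 - q u) ^ m| ≤ 1
    rw [abs_of_nonneg (pow_nonneg (by linarith [hq1 u] : (0:ℝ) ≤ 1 - q u) m)]
    exact pow_le_one₀ (by linarith [hq1 u] : (0:ℝ) ≤ 1 - q u)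
      (by linarith [hq0 u] : 1 - q u ≤ 1)
  have hae1 : (fun u => q u ^ m) =ᵐ[ν] 0 := by
    rw [← integral_eq_zero_iff_of_nonneg (fun u => pow_nonneg (hq0 u) m) hqintpow]
    exact hint1
  have hae0 : (fun u => (1 - q u) ^ m) =ᵐ[ν] 0 := by
    rw [← integral_eq_zero_iff_of_nonneg
      (fun u => pow_nonneg (by linarith [hq1 u] : (0:ℝ) ≤ 1 - q u) m) h1qintpow]
    have : ∀ u, ∫ v, (1 - φ u v) ∂ν = 1 - q u := h1q
    rw [← hint0]
    apply integral_congr_ae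
    filter_upwards with u
    rw [h1q u]
  haveI : (ae ν).NeBot := ae_neBot.2 (IsProbabilityMeasure.ne_zero ν)
  obtain ⟨u, hu1, hu0⟩ := (hae1.and hae0).exists
  simp only [Pi.zero_apply] at hu1 hu0
  have hm0 : m ≠ 0 := by omega
  have h1 : q u = 0 := pow_eq_zero_iff hm0 |>.1 hu1
  have h2 : 1 - q u = 0 := pow_eq_zero_iff hm0 |>.1 hu0
  linarith
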